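/- Let (ξ̄*, η̄*, σ̄*) ∈ (ℝ×ℝ²)³ be such that η̄* + σ̄* = 0, η₀* ≠ 0 and 3(η₀*)² ≠ |η*|². Then there is an open neighborhood U of (ξ̄*, η̄*, σ̄*) in (ℝ×ℝ²)³ such that for every (ξ̄, η̄, σ̄) ∈ U one has ∇_η̄ φ₃(ξ̄,η̄,σ̄) = ∇_σ̄ φ₃(ξ̄,η̄,σ̄) if and only if η̄ + σ̄ = 0; i.e., near such points the zero set of ∇_η̄ φ₃ − ∇_σ̄ φ₃ coincides with the antidiagonal {η̄ + σ̄ = 0}. -/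

import Mathlib

noncomputable section

/-- The frequency space `ℝ × ℝ²`, represented as Euclidean `ℝ³`:
coordinate `0` is `v₀` and coordinates `1, 2` form the spatial part `v`. -/
abbrev E3 : Type := EuclideanSpace ℝ (Fin 3)

/-- The dispersion relation `ω(v̄) = v₀(v₀² + |v|²)`. -/
def omega (v : E3) : ℝ := v 0 * ((v 0) ^ 2 + (v 1) ^ 2 + (v 2) ^ 2)

/-- The cubic phase `φ₃(ξ̄,η̄,σ̄) = ω(ξ̄) − ω(η̄) − ω(σ̄) − ω(ρ̄)` with `ρ̄ = ξ̄ − η̄ − σ̄`. -/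
def phi3 (ξ η σ : E3) : ℝ := omega ξ - omega η - omega σ - omega (ξ - η - σ)

def Dw (v : E3) : E3 →L[ℝ] ℝ :=
  (3 * (v 0) ^ 2 + (v 1) ^ 2 + (v 2) ^ 2) • EuclideanSpace.proj (0 : Fin 3)
  + (2 * v 0 * v 1) • EuclideanSpace.proj (1 : Fin 3)
  + (2 * v 0 * v 2) • EuclideanSpace.proj (2 : Fin 3)

lemma hasFDerivAt_omega (v : E3) : HasFDerivAt omega (Dw v) v := by
  have hp : ∀ i : Fin 3, HasFDerivAt (fun w : E3 => w i)
      (EuclideanSpace.proj (i : Fin 3) : E3 →L[ℝ] ℝ) v := by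
    intro i
    simpa using (EuclideanSpace.proj (i : Fin 3) : E3 →L[ℝ] ℝ).hasFDerivAt
  have homega : omega = fun w : E3 =>
      w 0 * (w 0 * w 0 + w 1 * w 1 + w 2 * w 2) := by
    funext w; simp only [omega]; ring
  rw [homega]
  have h := (hp 0).mul ((((hp 0).mul (hp 0)).add ((hp 1).mul (hp 1))).add
    ((hp 2).mul (hp 2)))
  refine h.congr_fderiv ?_
  ext w
  simp [Dw]
  ring

lemma hasFDerivAt_phi_eta (ξ η σ : E3) :
    HasFDerivAt (fun η' => phi3 ξ η' σ) (Dw (ξ - η - σ) - Dw η) η := by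
  have hin : HasFDerivAt (fun η' : E3 => ξ - η' - σ)
      (((0 : E3 →L[ℝ] E3) - ContinuousLinearMap.id ℝ E3) - 0) η :=
    ((hasFDerivAt_const ξ η).sub (hasFDerivAt_id η)).sub (hasFDerivAt_const σ η)
  have h := (((hasFDerivAt_const (omega ξ) η).sub (hasFDerivAt_omega η)).sub
      (hasFDerivAt_const (omega σ) η)).sub
      ((hasFDerivAt_omega (ξ - η - σ)).comp η hin)
  refine h.congr_fderiv ?_
  ext w
  simp [phi3]
  ring

lemma hasFDerivAt_phi_sigma (ξ η σ : E3) :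
    HasFDerivAt (fun σ' => phi3 ξ η σ') (Dw (ξ - η - σ) - Dw σ) σ := by
  have hin : HasFDerivAt (fun σ' : E3 => ξ - η - σ')
      ((0 : E3 →L[ℝ] E3) - ContinuousLinearMap.id ℝ E3) σ :=
    (hasFDerivAt_const (ξ - η) σ).sub (hasFDerivAt_id σ)
  have h := (((hasFDerivAt_const (omega ξ) σ).sub
      (hasFDerivAt_const (omega η) σ)).sub (hasFDerivAt_omega σ)).sub
      ((hasFDerivAt_omega (ξ - η - σ)).comp σ hin)
  refine h.congr_fderiv ?_
  ext w
  simp [phi3]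
  ring

lemma grad_iff (ξ η σ : E3) :
    (gradient (fun η' => phi3 ξ η' σ) η = gradient (fun σ' => phi3 ξ η σ') σ) ↔
      Dw η = Dw σ := by
  unfold gradient
  rw [(hasFDerivAt_phi_eta ξ η σ).fderiv, (hasFDerivAt_phi_sigma ξ η σ).fderiv]
  constructor
  · intro h
    have := (InnerProductSpace.toDual ℝ E3).symm.injective h
    exact sub_right_injective this
  · intro h; rw [h]

lemma Dw_eq_iff (η σ : E3) :
    Dw η = Dw σ ↔
      (3 * (η 0) ^ 2 + (η 1) ^ 2 + (η 2) ^ 2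
        = 3 * (σ 0) ^ 2 + (σ 1) ^ 2 + (σ 2) ^ 2)
      ∧ η 0 * η 1 = σ 0 * σ 1 ∧ η 0 * η 2 = σ 0 * σ 2 := by
  constructor
  · intro h
    have h0 := congrFun (congrArg (fun L : E3 →L[ℝ] ℝ => (L : E3 → ℝ)) h)
      (EuclideanSpace.single (0 : Fin 3) (1 : ℝ))
    have h1 := congrFun (congrArg (fun L : E3 →L[ℝ] ℝ => (L : E3 → ℝ)) h)
      (EuclideanSpace.single (1 : Fin 3) (1 : ℝ))
    have h2 := congrFun (congrArg (fun L : E3 →L[ℝ] ℝ => (L : E3 → ℝ)) h)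
      (EuclideanSpace.single (2 : Fin 3) (1 : ℝ))
    simp [Dw, EuclideanSpace.single_apply] at h0 h1 h2
    refine ⟨by linarith, by linarith, by linarith⟩
  · rintro ⟨e1, e2, e3⟩
    unfold Dw
    rw [e1, show (2 : ℝ) * η 0 * η 1 = 2 * σ 0 * σ 1 by linarith,
      show (2 : ℝ) * η 0 * η 2 = 2 * σ 0 * σ 2 by linarith]


/-- near a point `(ξ̄*,η̄*,σ̄*)` with `η̄* + σ̄* = 0`, `η₀* ≠ 0` and
`3(η₀*)² ≠ |η*|²`, the zero set of `∇_η̄ φ₃ − ∇_σ̄ φ₃` coincides with the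
antidiagonal `{η̄ + σ̄ = 0}`. -/
theorem stmt_2 (ξs ηs σs : E3)
    (h0 : ηs + σs = 0) (h1 : ηs 0 ≠ 0)
    (h2 : 3 * (ηs 0) ^ 2 ≠ (ηs 1) ^ 2 + (ηs 2) ^ 2) :
    ∃ U : Set (E3 × E3 × E3), IsOpen U ∧ (ξs, ηs, σs) ∈ U ∧
      ∀ p ∈ U,
        (gradient (fun η' => phi3 p.1 η' p.2.2) p.2.1 =
            gradient (fun σ' => phi3 p.1 p.2.1 σ') p.2.2 ↔
          p.2.1 + p.2.2 = 0) := by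
  have hcoord : ∀ i : Fin 3, Continuous fun p : E3 × E3 × E3 => p.2.1 i := by
    intro i
    exact (EuclideanSpace.proj i).continuous.comp (continuous_fst.comp continuous_snd)
  have hcoord' : ∀ i : Fin 3, Continuous fun p : E3 × E3 × E3 => p.2.2 i := by
    intro i
    exact (EuclideanSpace.proj i).continuous.comp (continuous_snd.comp continuous_snd)
  refine ⟨{p : E3 × E3 × E3 | p.2.1 0 * p.2.2 0 < 0 ∧
      3 * (p.2.1 0) ^ 2 ≠ (p.2.2 1) ^ 2 + (p.2.2 2) ^ 2}, ?_, ?_, ?_⟩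
  · exact (isOpen_lt ((hcoord 0).mul (hcoord' 0)) continuous_const).inter
      (isOpen_ne_fun (by continuity) (by continuity))
  · have h0i : ∀ i, σs i = -(ηs i) := by
      intro i
      have := congrFun (congrArg (WithLp.equiv 2 (Fin 3 → ℝ)) h0) i
      simp at this
      linarith
    constructor
    · show ηs 0 * σs 0 < 0
      rw [h0i 0]
      rcases h1.lt_or_gt with h | h <;> nlinarith
    · show 3 * (ηs 0) ^ 2 ≠ (σs 1) ^ 2 + (σs 2) ^ 2
      rw [h0i 1, h0i 2]
      intro hcon
      apply h2
      rw [hcon]; ring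
  · rintro p ⟨hlt, hne⟩
    set η := p.2.1
    set σ := p.2.2
    rw [grad_iff, Dw_eq_iff]
    constructor
    · rintro ⟨e1, e2, e3⟩
      have key : (η 0 ^ 2 - σ 0 ^ 2) * (3 * η 0 ^ 2 - (σ 1 ^ 2 + σ 2 ^ 2)) = 0 := by
        linear_combination (η 0 ^ 2) * e1 - (η 0 * η 1 + σ 0 * σ 1) * e2
          - (η 0 * η 2 + σ 0 * σ 2) * e3
      have hsq : η 0 ^ 2 = σ 0 ^ 2 := by
        rcases mul_eq_zero.1 key with h | h
        · linarith
        · exact absurd (by linarith) hne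
      have hη0 : η 0 ≠ 0 := by
        intro h; rw [h] at hlt; simp at hlt
      have h00 : η 0 = -(σ 0) := by
        have : (η 0 - σ 0) * (η 0 + σ 0) = 0 := by nlinarith [hsq]
        rcases mul_eq_zero.1 this with h | h
        · exfalso; nlinarith [hlt]
        · linarith
      have h11 : η 1 = -(σ 1) := by
        have : η 0 * (η 1 + σ 1) = 0 := by rw [mul_add, e2, h00]; ring
        rcases mul_eq_zero.1 this with h | h
        · exact absurd h hη0
        · linarith
      have h22 : η 2 = -(σ 2) := by
        have : η 0 * (η 2 + σ 2) = 0 := by rw [mul_add, e3, h00]; ring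
        rcases mul_eq_zero.1 this with h | h
        · exact absurd h hη0
        · linarith
      apply PiLp.ext
      intro i
      fin_cases i
      · show η 0 + σ 0 = 0; linarith
      · show η 1 + σ 1 = 0; linarith
      · show η 2 + σ 2 = 0; linarith
    · intro hsum
      have hσ : ∀ i, σ i = -(η i) := by
        intro i
        have := congrFun (congrArg (WithLp.equiv 2 (Fin 3 → ℝ)) hsum) i
        simp at this
        linarith
      refine ⟨?_, ?_, ?_⟩ <;> rw [hσ 0] <;> [rw [hσ 1, hσ 2]; rw [hσ 1]; rw [hσ 2]] <;> ring
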